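/- For a fixed positive integer n, the map f_n from ℝ × ℂ (with the universal-cover SU(1,1) group law) to diffeomorphisms of ℝ, given by f_n(s, w)(θ) = θ + (2/n)s + (2/n)Arg(√(|w|²+1) − i w̄ e^{−i(nθ+s)}), is a group homomorphism: f_n(s₁,w₁) ∘ f_n(s₂,w₂) = f_n((s₁,w₁)·(s₂,w₂)). -/

import Mathlib

open Complex
open scoped Real

lemma re_pos_aux {a : ℝ} {u : ℂ} (h : ‖u‖ < a) :
    0 < ((a : ℂ) + u).re := by
  have h1 : |u.re| ≤ ‖u‖ := Complex.abs_re_le_norm u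
  have h2 := abs_le.mp h1
  simp only [Complex.add_re, Complex.ofReal_re]
  linarith [h2.1]

lemma arg_mul_pos {x y : ℂ} (hx : 0 < x.re) (hy : 0 < y.re) :
    Complex.arg (x * y) = Complex.arg x + Complex.arg y := by
  have hx0 : x ≠ 0 := fun h => by simp [h] at hx
  have hy0 : y ≠ 0 := fun h => by simp [h] at hy
  have h1 : |Complex.arg x| < π/2 := Complex.abs_arg_lt_pi_div_two_iff.mpr (Or.inl hx)
  have h2 : |Complex.arg y| < π/2 := Complex.abs_arg_lt_pi_div_two_iff.mpr (Or.inl hy)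
  have h1' := abs_lt.mp h1
  have h2' := abs_lt.mp h2
  exact Complex.arg_mul hx0 hy0 ⟨by linarith [h1'.1, h2'.1], by linarith [h1'.2, h2'.2]⟩

/-- positivity of the real part, abstract version. -/
lemma phi_re_pos' (w z : ℂ) (hz : ‖z‖ = 1) :
    0 < ((Real.sqrt (‖w‖ ^ 2 + 1) : ℂ)
      - I * (starRingEnd ℂ w) * z).re := by
  have hlt : ‖w‖ < Real.sqrt (‖w‖ ^ 2 + 1) :=
    Real.lt_sqrt_of_sq_lt (by linarith)
  have habs : ‖-(I * (starRingEnd ℂ w) * z)‖ = ‖w‖ := by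
    simp [hz]
  have h := re_pos_aux (a := Real.sqrt (‖w‖ ^ 2 + 1))
    (u := -(I * (starRingEnd ℂ w) * z)) (by rw [habs]; exact hlt)
  have heq : (Real.sqrt (‖w‖ ^ 2 + 1) : ℂ) - I * (starRingEnd ℂ w) * z
      = (Real.sqrt (‖w‖ ^ 2 + 1) : ℂ) + -(I * (starRingEnd ℂ w) * z) := by ring
  rw [heq]; exact h

noncomputable def fEmb (n : ℕ) (s : ℝ) (w : ℂ) (θ : ℝ) : ℝ :=
  θ + (2 / n) * s + (2 / n) * Complex.arg
    ((Real.sqrt (‖w‖ ^ 2 + 1) : ℂ)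
      - I * (starRingEnd ℂ w) * Complex.exp (-I * ((n : ℝ) * θ + s)))

noncomputable def suCoverMul (p q : ℝ × ℂ) : ℝ × ℂ :=
  (p.1 + q.1 + Complex.arg
      ((Real.sqrt ((‖p.2‖ ^ 2 + 1) * (‖q.2‖ ^ 2 + 1)) : ℂ)
        + (starRingEnd ℂ p.2) * q.2 * Complex.exp (-I * ((p.1 : ℝ) + q.1))),
    q.2 * Complex.exp (-I * (p.1 : ℝ)) * (Real.sqrt (‖p.2‖ ^ 2 + 1) : ℂ)
      + p.2 * Complex.exp (I * (q.1 : ℝ)) * (Real.sqrt (‖q.2‖ ^ 2 + 1) : ℂ))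

set_option maxHeartbeats 1000000 in
theorem fEmb_homomorphism (n : ℕ) (hn : 0 < n) (s₁ s₂ : ℝ) (w₁ w₂ : ℂ) (θ : ℝ) :
    fEmb n s₁ w₁ (fEmb n s₂ w₂ θ)
      = fEmb n (suCoverMul (s₁, w₁) (s₂, w₂)).1 (suCoverMul (s₁, w₁) (s₂, w₂)).2 θ := by
  have hn' : (n : ℝ) ≠ 0 := Nat.cast_ne_zero.mpr hn.ne'
  -- real square roots
  set a1 : ℝ := Real.sqrt (‖w₁‖ ^ 2 + 1) with ha1def
  set a2 : ℝ := Real.sqrt (‖w₂‖ ^ 2 + 1) with ha2def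
  have ha1sq : a1 ^ 2 = ‖w₁‖ ^ 2 + 1 := Real.sq_sqrt (by positivity)
  have ha2sq : a2 ^ 2 = ‖w₂‖ ^ 2 + 1 := Real.sq_sqrt (by positivity)
  have ha1pos : 0 < a1 := Real.sqrt_pos.mpr (by positivity)
  have ha2pos : 0 < a2 := Real.sqrt_pos.mpr (by positivity)
  -- basic unit complexes
  set t : ℂ := Complex.exp (-I * (((n:ℝ) : ℂ) * (θ:ℂ))) with htdef
  set p : ℂ := Complex.exp (-I * (s₁ : ℂ)) with hpdef
  set q : ℂ := Complex.exp (-I * (s₂ : ℂ)) with hqdef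
  have ht0 : t ≠ 0 := Complex.exp_ne_zero _
  have hp0 : p ≠ 0 := Complex.exp_ne_zero _
  have hq0 : q ≠ 0 := Complex.exp_ne_zero _
  have habs_t : ‖t‖ = 1 := by rw [htdef]; simp [Complex.norm_exp]
  have habs_p : ‖p‖ = 1 := by rw [hpdef]; simp [Complex.norm_exp]
  have habs_q : ‖q‖ = 1 := by rw [hqdef]; simp [Complex.norm_exp]
  have hconj_t : (starRingEnd ℂ) t = t⁻¹ := by
    rw [htdef, ← Complex.exp_conj, ← Complex.exp_neg]; congr 1
    simp [map_mul, Complex.conj_ofReal]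
  have hconj_p : (starRingEnd ℂ) p = p⁻¹ := by
    rw [hpdef, ← Complex.exp_conj, ← Complex.exp_neg]; congr 1
    simp [map_mul, Complex.conj_ofReal]
  have hconj_q : (starRingEnd ℂ) q = q⁻¹ := by
    rw [hqdef, ← Complex.exp_conj, ← Complex.exp_neg]; congr 1
    simp [map_mul, Complex.conj_ofReal]
  -- the key complex quantities
  set Φ₂ : ℂ := (a2 : ℂ) - I * (starRingEnd ℂ w₂)
      * Complex.exp (-I * (((n:ℝ):ℂ) * (θ:ℂ) + (s₂:ℂ))) with hΦ₂def
  have hE2 : Complex.exp (-I * (((n:ℝ):ℂ) * (θ:ℂ) + (s₂:ℂ))) = t * q := by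
    rw [htdef, hqdef, ← Complex.exp_add]; congr 1; ring
  have hΦ₂re : 0 < Φ₂.re := phi_re_pos' w₂ _ (by rw [hE2]; simp [habs_t, habs_q])
  have hΦ₂0 : Φ₂ ≠ 0 := fun h => by simp [h] at hΦ₂re
  set A : ℂ := (Real.sqrt ((‖w₁‖ ^ 2 + 1) * (‖w₂‖ ^ 2 + 1)) : ℂ)
      + (starRingEnd ℂ w₁) * w₂ * Complex.exp (-I * ((s₁:ℂ) + (s₂:ℂ))) with hAdef
  have hsqrtmul : Real.sqrt ((‖w₁‖ ^ 2 + 1) * (‖w₂‖ ^ 2 + 1)) = a1 * a2 := by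
    rw [Real.sqrt_mul (by positivity), ha1def, ha2def]
  have hE12 : Complex.exp (-I * ((s₁:ℂ) + (s₂:ℂ))) = p * q := by
    rw [hpdef, hqdef, ← Complex.exp_add]; congr 1; ring
  have hA' : A = ((a1 : ℂ) * a2) + (starRingEnd ℂ w₁) * w₂ * (p * q) := by
    rw [hAdef, hsqrtmul, hE12]; push_cast; ring
  have hAre : 0 < A.re := by
    rw [hA']
    have habsu : ‖(starRingEnd ℂ w₁) * w₂ * (p * q)‖
        = ‖w₁‖ * ‖w₂‖ := by
      simp [map_mul, habs_p, habs_q]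
    have hlt1 : ‖w₁‖ < a1 := Real.lt_sqrt_of_sq_lt (by linarith)
    have hlt2 : ‖w₂‖ < a2 := Real.lt_sqrt_of_sq_lt (by linarith)
    have hlt : ‖(starRingEnd ℂ w₁) * w₂ * (p * q)‖ < a1 * a2 := by
      rw [habsu]
      calc ‖w₁‖ * ‖w₂‖ ≤ ‖w₁‖ * a2 := by
            exact mul_le_mul_of_nonneg_left hlt2.le (norm_nonneg _)
        _ < a1 * a2 := by exact mul_lt_mul_of_pos_right hlt1 ha2pos
    have := re_pos_aux (a := a1 * a2) hlt
    have hc : ((a1 * a2 : ℝ) : ℂ) = (a1 : ℂ) * a2 := by push_cast; ring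
    rw [hc] at this
    exact this
  have hA0 : A ≠ 0 := fun h => by simp [h] at hAre
  have habsA : 0 < ‖A‖ := norm_pos_iff.mpr hA0
  -- w₃
  set w₃ : ℂ := w₂ * Complex.exp (-I * (s₁:ℂ)) * (a1 : ℂ)
      + w₁ * Complex.exp (I * (s₂:ℂ)) * (a2 : ℂ) with hw₃def
  have hExpIq : Complex.exp (I * (s₂:ℂ)) = q⁻¹ := by
    rw [hqdef, ← Complex.exp_neg]; congr 1; ring
  have hw₃' : w₃ = w₂ * p * (a1:ℂ) + w₁ * q⁻¹ * (a2:ℂ) := by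
    rw [hw₃def, hpdef, hExpIq]
  have hconjw₃ : (starRingEnd ℂ) w₃
      = (starRingEnd ℂ w₂) * p⁻¹ * (a1:ℂ) + (starRingEnd ℂ w₁) * q * (a2:ℂ) := by
    rw [hw₃', map_add, map_mul, map_mul, map_mul, map_mul, hconj_p, Complex.conj_ofReal,
      Complex.conj_ofReal, map_inv₀, hconj_q, inv_inv]
  -- complex versions of the square relations
  have hca1 : (a1 : ℂ) ^ 2 = w₁ * (starRingEnd ℂ w₁) + 1 := by
    rw [← Complex.ofReal_pow, ha1sq]
    push_cast
    rw [Complex.mul_conj]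
    norm_cast
    rw [Complex.sq_norm]
  have hca2 : (a2 : ℂ) ^ 2 = w₂ * (starRingEnd ℂ w₂) + 1 := by
    rw [← Complex.ofReal_pow, ha2sq]
    push_cast
    rw [Complex.mul_conj]
    norm_cast
    rw [Complex.sq_norm]
  -- |w₃|² + 1 = |A|²
  have h3 : ‖w₃‖ ^ 2 + 1 = ‖A‖ ^ 2 := by
    have hcw : ((‖w₃‖ ^ 2 + 1 : ℝ) : ℂ) = w₃ * (starRingEnd ℂ w₃) + 1 := by
      push_cast
      rw [Complex.mul_conj]
      norm_cast
      rw [Complex.sq_norm]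
    have hcA : ((‖A‖ ^ 2 : ℝ) : ℂ) = A * (starRingEnd ℂ A) := by
      push_cast
      rw [Complex.mul_conj]
      norm_cast
      rw [Complex.sq_norm]
    have hconjA : (starRingEnd ℂ) A
        = ((a1 : ℂ) * a2) + w₁ * (starRingEnd ℂ w₂) * (p⁻¹ * q⁻¹) := by
      rw [hA']
      simp only [map_add, map_mul, Complex.conj_ofReal, Complex.conj_conj, hconj_p, hconj_q]
    have hP : p * p⁻¹ = 1 := mul_inv_cancel₀ hp0
    have hQ : q * q⁻¹ = 1 := mul_inv_cancel₀ hq0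
    have key : w₃ * (starRingEnd ℂ w₃) + 1 = A * (starRingEnd ℂ A) := by
      rw [hconjw₃, hw₃', hconjA, hA']
      linear_combination ((w₂ * (starRingEnd ℂ w₂)) - (a2:ℂ)^2) * hca1 - hca2
        + ((a1:ℂ)^2 * (w₂ * (starRingEnd ℂ w₂)) - (w₁ * (starRingEnd ℂ w₁)) * (w₂ * (starRingEnd ℂ w₂))) * hP
        + ((a2:ℂ)^2 * (w₁ * (starRingEnd ℂ w₁)) - (w₁ * (starRingEnd ℂ w₁)) * (w₂ * (starRingEnd ℂ w₂)) * p * p⁻¹) * hQ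
    apply Complex.ofReal_injective
    rw [hcw, hcA, key]
  have hsqrt3 : Real.sqrt (‖w₃‖ ^ 2 + 1) = ‖A‖ := by
    rw [h3, Real.sqrt_sq (norm_nonneg A)]
  have habsAne : (‖A‖ : ℝ) ≠ 0 := ne_of_gt habsA
  have hP : p * p⁻¹ = 1 := mul_inv_cancel₀ hp0
  have hQ : q * q⁻¹ = 1 := mul_inv_cancel₀ hq0
  -- conj of Φ₂ and A
  have hconjΦ₂ : (starRingEnd ℂ) Φ₂ = (a2 : ℂ) + I * w₂ * (t * q)⁻¹ := by
    rw [hΦ₂def, hE2]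
    simp only [map_sub, map_mul, Complex.conj_ofReal, Complex.conj_I, Complex.conj_conj,
      hconj_t, hconj_q, mul_inv]
    ring
  have hconjA : (starRingEnd ℂ) A
      = ((a1 : ℂ) * a2) + w₁ * (starRingEnd ℂ w₂) * (p⁻¹ * q⁻¹) := by
    rw [hA']
    simp only [map_add, map_mul, Complex.conj_ofReal, Complex.conj_conj, hconj_p, hconj_q]
  have hAA : A * (starRingEnd ℂ) A = ((‖A‖ : ℝ) : ℂ) ^ 2 := by
    rw [Complex.mul_conj, Complex.normSq_eq_norm_sq]; push_cast; ring
  -- exp of the doubled argument of Φ₂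
  have habsΦ₂ne : ((‖Φ₂‖ : ℝ) : ℂ) ≠ 0 := by
    exact_mod_cast (norm_ne_zero_iff.mpr hΦ₂0)
  have hargexp : Complex.exp ((Complex.arg Φ₂ : ℂ) * I) = Φ₂ / (‖Φ₂‖ : ℂ) := by
    rw [eq_div_iff habsΦ₂ne, mul_comm]
    exact Complex.norm_mul_exp_arg_mul_I Φ₂
  have hΦΦ : Φ₂ * (starRingEnd ℂ) Φ₂ = ((‖Φ₂‖ : ℝ) : ℂ) ^ 2 := by
    rw [Complex.mul_conj, Complex.normSq_eq_norm_sq]; push_cast; ring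
  have hΦ₂inv : Φ₂ * Φ₂⁻¹ = 1 := mul_inv_cancel₀ hΦ₂0
  have hexp2 : Complex.exp (-I * (2 * (Complex.arg Φ₂ : ℂ)))
      = (starRingEnd ℂ) Φ₂ * Φ₂⁻¹ := by
    have h1 : Complex.exp (-((Complex.arg Φ₂ : ℂ) * I))
        = ((‖Φ₂‖ : ℝ) : ℂ) * Φ₂⁻¹ := by
      rw [Complex.exp_neg, hargexp, div_eq_mul_inv, mul_inv, inv_inv]
      ring
    rw [show (-I * (2 * (Complex.arg Φ₂ : ℂ))) =
      -((Complex.arg Φ₂ : ℂ) * I) + -((Complex.arg Φ₂ : ℂ) * I) by ring]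
    rw [Complex.exp_add, h1]
    calc (((‖Φ₂‖ : ℝ) : ℂ) * Φ₂⁻¹) * (((‖Φ₂‖ : ℝ) : ℂ) * Φ₂⁻¹)
        = (((‖Φ₂‖ : ℝ) : ℂ) ^ 2) * (Φ₂⁻¹ * Φ₂⁻¹) := by ring
      _ = (Φ₂ * (starRingEnd ℂ) Φ₂) * (Φ₂⁻¹ * Φ₂⁻¹) := by rw [hΦΦ]
      _ = ((starRingEnd ℂ) Φ₂ * Φ₂⁻¹) * (Φ₂ * Φ₂⁻¹) := by ring
      _ = (starRingEnd ℂ) Φ₂ * Φ₂⁻¹ := by rw [hΦ₂inv, mul_one]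
  -- exp of arg A
  have hargexpA : Complex.exp (-((Complex.arg A : ℂ) * I))
      = (starRingEnd ℂ) A * ((‖A‖ : ℝ) : ℂ)⁻¹ := by
    have hAe : Complex.exp ((Complex.arg A : ℂ) * I) = A / (‖A‖ : ℂ) := by
      rw [eq_div_iff (by exact_mod_cast habsAne), mul_comm]
      exact Complex.norm_mul_exp_arg_mul_I A
    have hrne : ((‖A‖ : ℝ) : ℂ) ≠ 0 := by exact_mod_cast habsAne
    have hAinv : A * A⁻¹ = 1 := mul_inv_cancel₀ hA0
    have habsinv : ((‖A‖ : ℝ) : ℂ) * ((‖A‖ : ℝ) : ℂ)⁻¹ = 1 :=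
      mul_inv_cancel₀ hrne
    rw [Complex.exp_neg, hAe, div_eq_mul_inv, mul_inv, inv_inv]
    linear_combination ((starRingEnd ℂ) A * ((‖A‖ : ℝ) : ℂ)⁻¹) * hAinv
      - (((‖A‖ : ℝ) : ℂ) * A⁻¹) * habsinv
      - (A⁻¹ * ((‖A‖ : ℝ) : ℂ)⁻¹) * hAA
  -- the Φ₁ and Φ₃ quantities
  set Φ₁ : ℂ := (a1 : ℂ) - I * (starRingEnd ℂ w₁)
      * Complex.exp (-I * (((n:ℝ):ℂ) * ((θ + 2/(n:ℝ)*s₂ + 2/(n:ℝ)*Complex.arg Φ₂ : ℝ) : ℂ)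
        + (s₁:ℂ))) with hΦ₁def
  set Φ₃ : ℂ := ((‖A‖ : ℝ) : ℂ) - I * (starRingEnd ℂ w₃)
      * Complex.exp (-I * (((n:ℝ):ℂ) * (θ:ℂ) + ((s₁ + s₂ + Complex.arg A : ℝ) : ℂ))) with hΦ₃def
  have hexpΦ₁ : Complex.exp (-I * (((n:ℝ):ℂ) * ((θ + 2/(n:ℝ)*s₂ + 2/(n:ℝ)*Complex.arg Φ₂ : ℝ) : ℂ)
        + (s₁:ℂ))) = (t * q) * (p * q) * ((starRingEnd ℂ) Φ₂ * Φ₂⁻¹) := by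
    have harg : (-I * (((n:ℝ):ℂ) * ((θ + 2/(n:ℝ)*s₂ + 2/(n:ℝ)*Complex.arg Φ₂ : ℝ) : ℂ) + (s₁:ℂ)))
        = (-I * (((n:ℝ):ℂ) * (θ:ℂ) + (s₂:ℂ))) + (-I * ((s₁:ℂ) + (s₂:ℂ)))
          + (-I * (2 * (Complex.arg Φ₂ : ℂ))) := by
      have hnC : ((n:ℕ):ℂ) ≠ 0 := Nat.cast_ne_zero.mpr hn.ne'
      push_cast
      field_simp [hnC]
      ring
    rw [harg, Complex.exp_add, Complex.exp_add, hE2, hE12, hexp2]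
  have hexpΦ₃ : Complex.exp (-I * (((n:ℝ):ℂ) * (θ:ℂ) + ((s₁ + s₂ + Complex.arg A : ℝ) : ℂ)))
      = t * (p * q) * ((starRingEnd ℂ) A * ((‖A‖ : ℝ) : ℂ)⁻¹) := by
    have harg : (-I * (((n:ℝ):ℂ) * (θ:ℂ) + ((s₁ + s₂ + Complex.arg A : ℝ) : ℂ)))
        = (-I * (((n:ℝ):ℂ) * (θ:ℂ))) + (-I * ((s₁:ℂ) + (s₂:ℂ)))
          + (-((Complex.arg A : ℂ) * I)) := by
      push_cast; ring
    rw [harg, Complex.exp_add, Complex.exp_add, ← htdef, hE12, hargexpA]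
  -- positivity of the real parts of Φ₁ and Φ₃
  have hΦ₁re : 0 < Φ₁.re := by
    rw [hΦ₁def, ha1def]
    refine phi_re_pos' w₁ _ ?_
    rw [hexpΦ₁]
    simp [map_mul, habs_t, habs_p, habs_q, map_inv₀, Complex.norm_conj]
    field_simp [norm_ne_zero_iff.mpr hΦ₂0]
  have hΦ₃re : 0 < Φ₃.re := by
    rw [hΦ₃def, ← hsqrt3]
    refine phi_re_pos' w₃ _ ?_
    rw [hexpΦ₃]
    simp [map_mul, habs_t, habs_p, habs_q, map_inv₀, Complex.norm_conj]
    field_simp [habsAne]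
  -- the central complex identity
  have step1 : Φ₁ * Φ₂ = A - I * (starRingEnd ℂ w₃) * (t * p * q) := by
    rw [hΦ₁def, hexpΦ₁]
    calc ((a1 : ℂ) - I * (starRingEnd ℂ w₁)
          * ((t * q) * (p * q) * ((starRingEnd ℂ) Φ₂ * Φ₂⁻¹))) * Φ₂
        = (a1 : ℂ) * Φ₂ - I * (starRingEnd ℂ w₁)
            * ((t * q) * (p * q) * (starRingEnd ℂ) Φ₂) * (Φ₂ * Φ₂⁻¹) := by ring
      _ = (a1 : ℂ) * Φ₂ - I * (starRingEnd ℂ w₁)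
            * ((t * q) * (p * q) * (starRingEnd ℂ) Φ₂) := by rw [hΦ₂inv, mul_one]
      _ = A - I * (starRingEnd ℂ w₃) * (t * p * q) := by
          rw [hconjΦ₂, hconjw₃, hA', hΦ₂def, hE2]
          field_simp
          linear_combination (-(q * (starRingEnd ℂ) w₁ * p * w₂)) * Complex.I_sq
  have step2 : A * Φ₃ = ((‖A‖ : ℝ) : ℂ)
      * (A - I * (starRingEnd ℂ w₃) * (t * p * q)) := by
    have hrne : ((‖A‖ : ℝ) : ℂ) ≠ 0 := by exact_mod_cast habsAne
    rw [hΦ₃def, hexpΦ₃]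
    calc A * (((‖A‖ : ℝ) : ℂ) - I * (starRingEnd ℂ w₃)
          * (t * (p * q) * ((starRingEnd ℂ) A * ((‖A‖ : ℝ) : ℂ)⁻¹)))
        = ((‖A‖ : ℝ) : ℂ) * A - I * (starRingEnd ℂ w₃) * (t * p * q)
            * ((A * (starRingEnd ℂ) A) * ((‖A‖ : ℝ) : ℂ)⁻¹) := by ring
      _ = ((‖A‖ : ℝ) : ℂ) * A - I * (starRingEnd ℂ w₃) * (t * p * q)
            * ((((‖A‖ : ℝ) : ℂ) ^ 2) * ((‖A‖ : ℝ) : ℂ)⁻¹) := by rw [hAA]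
      _ = ((‖A‖ : ℝ) : ℂ) * A - I * (starRingEnd ℂ w₃) * (t * p * q)
            * ((‖A‖ : ℝ) : ℂ) := by
          rw [show (((‖A‖ : ℝ) : ℂ) ^ 2) * ((‖A‖ : ℝ) : ℂ)⁻¹
            = ((‖A‖ : ℝ) : ℂ) * (((‖A‖ : ℝ) : ℂ) * ((‖A‖ : ℝ) : ℂ)⁻¹) by ring,
            mul_inv_cancel₀ hrne, mul_one]
      _ = ((‖A‖ : ℝ) : ℂ)
            * (A - I * (starRingEnd ℂ w₃) * (t * p * q)) := by ring
  have hkeyC : ((‖A‖ : ℝ) : ℂ) * (Φ₁ * Φ₂) = A * Φ₃ := by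
    rw [step1, step2]
  -- the arg identity
  have hargkey : Complex.arg Φ₁ + Complex.arg Φ₂ = Complex.arg A + Complex.arg Φ₃ := by
    rw [← arg_mul_pos hΦ₁re hΦ₂re, ← arg_mul_pos hAre hΦ₃re]
    rw [← Complex.arg_real_mul (Φ₁ * Φ₂) habsA, hkeyC]
  -- final assembly
  simp only [fEmb, suCoverMul]
  rw [← ha1def, ← ha2def, ← hw₃def, hsqrt3, ← hAdef, ← hΦ₂def]
  rw [← hΦ₁def, ← hΦ₃def]
  linear_combination (2/(n:ℝ)) * hargkey
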